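/- For 2 ≤ r ≤ 7, if D ∈ ℤ^{r+1} satisfies (D,E) ≥ 0 for every exceptional class E and (D,-K) ≥ 0, then D lies in the monoid generated by the exceptional classes; for r = 8 one must additionally allow the generator -K. -/

import Mathlib

/-- The Del Pezzo intersection form on `ℤ^{r+1}`: `(l_0,l_0)=1`, `(l_i,l_i)=-1` for `i ≥ 1`,
`(l_i,l_j)=0` for `i ≠ j`. -/
def dpB {r : ℕ} (x y : Fin (r + 1) → ℤ) : ℤ :=
  x 0 * y 0 - ∑ i : Fin r, x i.succ * y i.succ

/-- The anticanonical class `-K = 3 l_0 - l_1 - ⋯ - l_r`. -/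
def negK {r : ℕ} : Fin (r + 1) → ℤ := fun i => if i = 0 then 3 else -1

/-- The standard basis vector `l_i`. -/
def l {r : ℕ} (i : Fin (r + 1)) : Fin (r + 1) → ℤ := fun j => if j = i then 1 else 0

/-- An exceptional class: `(E,E) = -1` and `(E,-K) = 1`. -/
def IsExc {r : ℕ} (E : Fin (r + 1) → ℤ) : Prop := dpB E E = -1 ∧ dpB E negK = 1

/-- A root: `(α,α) = -2` and `(α,-K) = 0`. -/
def IsRoot {r : ℕ} (a : Fin (r + 1) → ℤ) : Prop := dpB a a = -2 ∧ dpB a negK = 0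

/-- A ruling: `(D,D) = 0` and `(D,-K) = 2`. -/
def IsRuling {r : ℕ} (D : Fin (r + 1) → ℤ) : Prop := dpB D D = 0 ∧ dpB D negK = 2

/-- The reflection `σ_α(x) = x + (x,α) α`. -/
def reflct {r : ℕ} (a x : Fin (r + 1) → ℤ) : Fin (r + 1) → ℤ :=
  fun i => x i + dpB x a * a i


namespace DP
variable {r : ℕ}

lemma dpB_comm (x y : Fin (r+1) → ℤ) : dpB x y = dpB y x := by
  unfold dpB; rw [mul_comm]; congr 1; exact Finset.sum_congr rfl fun i _ => mul_comm _ _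

lemma dpB_add_left (x y z : Fin (r+1) → ℤ) : dpB (x + y) z = dpB x z + dpB y z := by
  unfold dpB; simp [add_mul, Finset.sum_add_distrib]; ring

lemma dpB_sub_left (x y z : Fin (r+1) → ℤ) : dpB (x - y) z = dpB x z - dpB y z := by
  unfold dpB; simp [sub_mul, Finset.sum_sub_distrib]; ring

lemma dpB_smul_left (c : ℤ) (x z : Fin (r+1) → ℤ) : dpB (c • x) z = c * dpB x z := by
  unfold dpB; simp only [Pi.smul_apply, smul_eq_mul, mul_sub, Finset.mul_sum]
  rw [show (∑ i : Fin r, c * x i.succ * z i.succ) = ∑ i : Fin r, c * (x i.succ * z i.succ) from Finset.sum_congr rfl fun i _ => by ring, ← Finset.mul_sum]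
  ring

lemma dpB_add_right (x y z : Fin (r+1) → ℤ) : dpB x (y + z) = dpB x y + dpB x z := by
  rw [dpB_comm, dpB_add_left, dpB_comm y x, dpB_comm z x]

lemma dpB_sub_right (x y z : Fin (r+1) → ℤ) : dpB x (y - z) = dpB x y - dpB x z := by
  rw [dpB_comm, dpB_sub_left, dpB_comm y x, dpB_comm z x]

lemma dpB_smul_right (c : ℤ) (x z : Fin (r+1) → ℤ) : dpB x (c • z) = c * dpB x z := by
  rw [dpB_comm, dpB_smul_left, dpB_comm z x]

lemma dpB_zero_left (z : Fin (r+1) → ℤ) : dpB 0 z = 0 := by unfold dpB; simp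

lemma dpB_l_zero (x : Fin (r+1) → ℤ) : dpB x (l 0) = x 0 := by
  unfold dpB l
  have : ∀ i : Fin r, x i.succ * (if (i.succ : Fin (r+1)) = 0 then (1:ℤ) else 0) = 0 := by
    intro i; simp [Fin.succ_ne_zero]
  rw [Finset.sum_congr rfl fun i _ => this i]; simp

lemma dpB_l (x : Fin (r+1) → ℤ) (i : Fin (r+1)) (hi : i ≠ 0) : dpB x (l i) = - x i := by
  unfold dpB l
  rw [if_neg (fun h => hi h.symm)]
  rw [Finset.sum_eq_single (i.pred hi)]
  · simp [Fin.succ_pred]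
  · intro b _ hb
    have : (b.succ : Fin (r+1)) ≠ i := by
      intro h; apply hb
      have : (b.succ : Fin (r+1)).pred (Fin.succ_ne_zero b) = i.pred hi := by
        congr 1
      simpa using this
    simp [this]
  · simp

lemma dpB_ll (i j : Fin (r+1)) : dpB (l i) (l j) =
    if i = j then (if i = 0 then 1 else -1) else 0 := by
  by_cases hj : j = 0
  · subst hj
    rw [dpB_l_zero]
    by_cases hi : i = 0 <;> simp [l, hi, eq_comm]
  · rw [dpB_l _ _ hj]
    by_cases hij : i = j
    · subst hij; simp [l, hj]
    · simp only [l, if_neg hij]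
      rw [if_neg (fun h : j = i => hij h.symm)]
      simp

lemma dpB_negK_l (i : Fin (r+1)) : dpB negK (l i) = if i = 0 then 3 else 1 := by
  by_cases hi : i = 0
  · subst hi; rw [dpB_l_zero]; simp [negK]
  · rw [dpB_l _ _ hi]; simp [negK, hi]

end DP

namespace DP
variable {r : ℕ}

lemma reflct_eq (a x : Fin (r+1) → ℤ) : reflct a x = x + dpB x a • a := by
  funext i; simp [reflct]

lemma dpB_reflct (a x y : Fin (r+1) → ℤ) (ha : IsRoot a) :
    dpB (reflct a x) (reflct a y) = dpB x y := by
  rw [reflct_eq, reflct_eq, dpB_add_left, dpB_add_right, dpB_add_right,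
    dpB_smul_left, dpB_smul_right, dpB_smul_right, dpB_smul_left, ha.1]
  rw [dpB_comm y a]
  ring

lemma reflct_reflct (a x : Fin (r+1) → ℤ) (ha : IsRoot a) :
    reflct a (reflct a x) = x := by
  rw [reflct_eq, reflct_eq, dpB_add_left, dpB_smul_left, ha.1]
  funext i
  simp only [Pi.add_apply, Pi.smul_apply, smul_eq_mul]
  ring

lemma reflct_add (a x y : Fin (r+1) → ℤ) :
    reflct a (x + y) = reflct a x + reflct a y := by
  rw [reflct_eq, reflct_eq, reflct_eq, dpB_add_left]
  funext i
  simp only [Pi.add_apply, Pi.smul_apply, smul_eq_mul]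
  ring

lemma reflct_zero (a : Fin (r+1) → ℤ) : reflct a 0 = 0 := by
  rw [reflct_eq, dpB_zero_left]; simp

lemma reflct_negK (a : Fin (r+1) → ℤ) (ha : IsRoot a) : reflct a negK = negK := by
  rw [reflct_eq]
  rw [show dpB negK a = 0 from by rw [dpB_comm]; exact ha.2]
  simp

lemma reflct_exc (a E : Fin (r+1) → ℤ) (ha : IsRoot a) (hE : IsExc E) :
    IsExc (reflct a E) := by
  constructor
  · rw [dpB_reflct a E E ha]; exact hE.1
  · rw [show (negK : Fin (r+1) → ℤ) = reflct a negK from (reflct_negK a ha).symm,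
      dpB_reflct a E negK ha]
    exact hE.2

lemma reflct_mem_closure {S : Set (Fin (r+1) → ℤ)} (a : Fin (r+1) → ℤ)
    (hS : ∀ x ∈ S, reflct a x ∈ S) (x : Fin (r+1) → ℤ)
    (hx : x ∈ AddSubmonoid.closure S) : reflct a x ∈ AddSubmonoid.closure S := by
  induction hx using AddSubmonoid.closure_induction with
  | mem y hy => exact AddSubmonoid.subset_closure (hS y hy)
  | zero => rw [reflct_zero]; exact zero_mem _
  | add y z _ _ hy hz => rw [reflct_add]; exact add_mem hy hz

end DP

namespace DP
variable {r : ℕ}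

lemma dpB_negK_right (i : Fin (r+1)) : dpB (l i) negK = if i = 0 then 3 else 1 := by
  rw [dpB_comm]; exact dpB_negK_l i

lemma isExc_l (i : Fin (r+1)) (hi : i ≠ 0) : IsExc (l i) := by
  constructor
  · rw [dpB_ll]; simp [hi]
  · rw [dpB_negK_right]; simp [hi]

lemma isExc_L (i j : Fin (r+1)) (hi : i ≠ 0) (hj : j ≠ 0) (hij : i ≠ j) :
    IsExc (l 0 - l i - l j) := by
  constructor
  · simp only [dpB_sub_left, dpB_sub_right, dpB_ll, if_pos rfl, if_neg hi, if_neg hj,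
      if_neg (Ne.symm hi), if_neg (Ne.symm hj), if_neg hij, if_neg (Ne.symm hij)]
    norm_num
  · simp only [dpB_sub_left, dpB_negK_right, if_pos rfl, if_neg hi, if_neg hj]
    norm_num

lemma isRoot_T (i j k : Fin (r+1)) (hi : i ≠ 0) (hj : j ≠ 0) (hk : k ≠ 0)
    (hij : i ≠ j) (hik : i ≠ k) (hjk : j ≠ k) : IsRoot (l 0 - l i - l j - l k) := by
  constructor
  · simp only [dpB_sub_left, dpB_sub_right, dpB_ll, if_pos rfl, if_neg hi, if_neg hj,
      if_neg hk, if_neg (Ne.symm hi), if_neg (Ne.symm hj), if_neg (Ne.symm hk),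
      if_neg hij, if_neg (Ne.symm hij), if_neg hik, if_neg (Ne.symm hik),
      if_neg hjk, if_neg (Ne.symm hjk)]
    norm_num
  · simp only [dpB_sub_left, dpB_negK_right, if_pos rfl, if_neg hi, if_neg hj, if_neg hk]
    norm_num

lemma dpB_L_val (D : Fin (r+1) → ℤ) (i j : Fin (r+1)) (hi : i ≠ 0) (hj : j ≠ 0) :
    dpB D (l 0 - l i - l j) = D 0 + D i + D j := by
  rw [dpB_sub_right, dpB_sub_right, dpB_l_zero, dpB_l _ _ hi, dpB_l _ _ hj]; ring

lemma dpB_T_val (D : Fin (r+1) → ℤ) (i j k : Fin (r+1)) (hi : i ≠ 0) (hj : j ≠ 0)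
    (hk : k ≠ 0) : dpB D (l 0 - l i - l j - l k) = D 0 + D i + D j + D k := by
  rw [dpB_sub_right, dpB_sub_right, dpB_sub_right, dpB_l_zero,
    dpB_l _ _ hi, dpB_l _ _ hj, dpB_l _ _ hk]; ring

/-- The normalized region. -/
def Reg (D : Fin (r+1) → ℤ) : Prop :=
  (∀ i : Fin (r+1), i ≠ 0 → D i ≤ 0) ∧
  (∀ i j k : Fin (r+1), i ≠ 0 → j ≠ 0 → k ≠ 0 → i ≠ j → i ≠ k → j ≠ k →
    0 ≤ D 0 + D i + D j + D k)

lemma nef_nonpos {D : Fin (r+1) → ℤ} (hnef : ∀ E, IsExc E → 0 ≤ dpB D E)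
    (i : Fin (r+1)) (hi : i ≠ 0) : D i ≤ 0 := by
  have := hnef _ (isExc_l i hi)
  rw [dpB_l _ _ hi] at this; omega

lemma nef_a_nonneg (hr : 2 ≤ r) {D : Fin (r+1) → ℤ}
    (hnef : ∀ E, IsExc E → 0 ≤ dpB D E) : 0 ≤ D 0 := by
  set i1 : Fin (r+1) := ⟨1, by omega⟩ with hi1
  set i2 : Fin (r+1) := ⟨2, by omega⟩ with hi2
  have h1 : i1 ≠ 0 := by simp [hi1, Fin.ext_iff]
  have h2 : i2 ≠ 0 := by simp [hi2, Fin.ext_iff]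
  have h12 : i1 ≠ i2 := by simp [hi1, hi2, Fin.ext_iff]
  have hL := hnef _ (isExc_L i1 i2 h1 h2 h12)
  rw [dpB_L_val D i1 i2 h1 h2] at hL
  have := nef_nonpos hnef i1 h1
  have := nef_nonpos hnef i2 h2
  omega

lemma lemA (hr : 2 ≤ r) (M : AddSubmonoid (Fin (r+1) → ℤ))
    (hM : ∀ a x, IsRoot a → x ∈ M → reflct a x ∈ M)
    (HC : ∀ D : Fin (r+1) → ℤ, Reg D → D ∈ M) :
    ∀ n : ℕ, ∀ D : Fin (r+1) → ℤ, (∀ E, IsExc E → 0 ≤ dpB D E) →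
      (D 0).toNat ≤ n → D ∈ M := by
  intro n
  induction n with
  | zero =>
    intro D hnef hn
    -- D 0 = 0
    by_cases hreg : ∀ i j k : Fin (r+1), i ≠ 0 → j ≠ 0 → k ≠ 0 → i ≠ j → i ≠ k → j ≠ k →
        0 ≤ D 0 + D i + D j + D k
    · exact HC D ⟨fun i hi => nef_nonpos hnef i hi, hreg⟩
    · exfalso
      push_neg at hreg
      obtain ⟨i, j, k, hi, hj, hk, hij, hik, hjk, hlt⟩ := hreg
      have ha := nef_a_nonneg hr hnef
      set α := l 0 - l i - l j - l k with hα
      have hroot := isRoot_T i j k hi hj hk hij hik hjk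
      have hval : dpB D α = D 0 + D i + D j + D k := dpB_T_val D i j k hi hj hk
      set D' := reflct α D with hD'
      have hnef' : ∀ E, IsExc E → 0 ≤ dpB D' E := by
        intro E hE
        have : dpB D' E = dpB D (reflct α E) := by
          conv_lhs => rw [show E = reflct α (reflct α E) from (reflct_reflct α E hroot).symm]
          exact dpB_reflct α D (reflct α E) hroot
        rw [this]
        exact hnef _ (reflct_exc α E hroot hE)
      have h0' : 0 ≤ D' 0 := nef_a_nonneg hr hnef'
      have hα0 : α 0 = 1 := by
        simp [hα, l, Ne.symm hi, Ne.symm hj, Ne.symm hk]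
      have : D' 0 = D 0 + dpB D α * α 0 := rfl
      rw [hα0, hval] at this
      omega
  | succ n ih =>
    intro D hnef hn
    by_cases hreg : ∀ i j k : Fin (r+1), i ≠ 0 → j ≠ 0 → k ≠ 0 → i ≠ j → i ≠ k → j ≠ k →
        0 ≤ D 0 + D i + D j + D k
    · exact HC D ⟨fun i hi => nef_nonpos hnef i hi, hreg⟩
    · push_neg at hreg
      obtain ⟨i, j, k, hi, hj, hk, hij, hik, hjk, hlt⟩ := hreg
      have ha := nef_a_nonneg hr hnef
      set α := l 0 - l i - l j - l k with hα
      have hroot := isRoot_T i j k hi hj hk hij hik hjk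
      have hval : dpB D α = D 0 + D i + D j + D k := dpB_T_val D i j k hi hj hk
      set D' := reflct α D with hD'
      have hnef' : ∀ E, IsExc E → 0 ≤ dpB D' E := by
        intro E hE
        have : dpB D' E = dpB D (reflct α E) := by
          conv_lhs => rw [show E = reflct α (reflct α E) from (reflct_reflct α E hroot).symm]
          exact dpB_reflct α D (reflct α E) hroot
        rw [this]
        exact hnef _ (reflct_exc α E hroot hE)
      have h0' : 0 ≤ D' 0 := nef_a_nonneg hr hnef'
      have hα0 : α 0 = 1 := by
        simp [hα, l, Ne.symm hi, Ne.symm hj, Ne.symm hk]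
      have hstep : D' 0 = D 0 + dpB D α * α 0 := rfl
      rw [hα0, hval] at hstep
      have hmem : D' ∈ M := ih D' hnef' (by omega)
      have : D = reflct α D' := (reflct_reflct α D hroot).symm
      rw [this]
      exact hM α D' hroot hmem

end DP

namespace DP9
open DP

abbrev V9 := Fin 9 → ℤ

/-- generators allowed for `D`: exceptional classes vanishing outside `{1,2} ∪ supp D`,
plus `-K` if `D` has full support. -/
def gen (D : V9) : Set V9 :=
  {E | IsExc E ∧ ∀ i : Fin 9, 2 < i.val → D i = 0 → E i = 0} ∪
  {x | x = negK ∧ ∀ i : Fin 9, i ≠ 0 → D i ≠ 0}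

lemma gen_mono {D D' : V9} (h : ∀ i : Fin 9, i ≠ 0 → D i = 0 → D' i = 0) :
    gen D' ⊆ gen D := by
  rintro E (⟨hE, hs⟩ | ⟨hE, hs⟩)
  · left
    refine ⟨hE, fun i hi h0 => hs i hi ?_⟩
    exact h i (by intro h'; subst h'; simp at hi) h0
  · right
    refine ⟨hE, fun i hi => ?_⟩
    intro h0
    exact hs i hi (h i hi h0)

/-- permutation of the coordinates 1..8 -/
def permV (f : Equiv.Perm (Fin 8)) (x : V9) : V9 :=
  fun j => Fin.cases (x 0) (fun i => x ((f i).succ)) j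

lemma permV_zero (f : Equiv.Perm (Fin 8)) (x : V9) : permV f x 0 = x 0 := rfl
lemma permV_succ (f : Equiv.Perm (Fin 8)) (x : V9) (p : Fin 8) :
    permV f x p.succ = x ((f p).succ) := rfl

lemma permV_inv (f : Equiv.Perm (Fin 8)) (x : V9) : permV f⁻¹ (permV f x) = x := by
  funext j
  induction j using Fin.cases with
  | zero => rfl
  | succ p => rw [permV_succ, permV_succ, show f (f⁻¹ p) = p from Equiv.apply_symm_apply f p]

lemma permV_add (f : Equiv.Perm (Fin 8)) (x y : V9) :
    permV f (x + y) = permV f x + permV f y := by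
  funext j
  induction j using Fin.cases with
  | zero => rfl
  | succ p => rfl

lemma permV_zero_vec (f : Equiv.Perm (Fin 8)) : permV f 0 = 0 := by
  funext j
  induction j using Fin.cases with
  | zero => rfl
  | succ p => rfl

lemma dpB_permV (f : Equiv.Perm (Fin 8)) (x y : V9) :
    dpB (permV f x) (permV f y) = dpB x y := by
  unfold dpB
  congr 1
  exact Equiv.sum_comp f (fun q => x q.succ * y q.succ)

lemma permV_negK (f : Equiv.Perm (Fin 8)) : permV f negK = negK := by
  funext j
  induction j using Fin.cases with
  | zero => rfl
  | succ p => simp [permV_succ, negK, Fin.succ_ne_zero]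

lemma permV_exc (f : Equiv.Perm (Fin 8)) {x : V9} (hx : IsExc x) : IsExc (permV f x) := by
  constructor
  · rw [dpB_permV]; exact hx.1
  · rw [show (negK : V9) = permV f negK from (permV_negK f).symm, dpB_permV]
    exact hx.2

lemma permV_closure (f : Equiv.Perm (Fin 8)) (x : V9)
    (h1 : x 1 ≠ 0) (h2 : x 2 ≠ 0)
    (hx : x ∈ AddSubmonoid.closure (gen x)) :
    permV f x ∈ AddSubmonoid.closure (gen (permV f x)) := by
  have himg : ∀ G ∈ gen x, permV f G ∈ gen (permV f x) := by
    rintro G (⟨hG, hs⟩ | ⟨hG, hs⟩)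
    · left
      refine ⟨permV_exc f hG, fun i hi h0 => ?_⟩
      have hine : i ≠ 0 := by
        intro h; subst h; simp at hi
      set p := i.pred hine with hp
      have hip : i = p.succ := (Fin.succ_pred i hine).symm
      rw [hip] at h0 ⊢
      rw [permV_succ] at h0 ⊢
      set q := (f p).succ with hq
      by_cases hq2 : 2 < q.val
      · exact hs q hq2 h0
      · -- q = 1 or 2, but x 1, x 2 ≠ 0 while x q = 0
        exfalso
        have hqne : q ≠ 0 := Fin.succ_ne_zero _
        have hv0 : q.val ≠ 0 := fun h => hqne (Fin.ext h)
        have : q = 1 ∨ q = 2 := by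
          rcases Nat.lt_or_ge q.val 2 with h' | h'
          · left; apply Fin.ext; simp; omega
          · right; apply Fin.ext; simp; omega
        rcases this with h' | h'
        · rw [h'] at h0; exact h1 h0
        · rw [h'] at h0; exact h2 h0
    · right
      subst hG
      refine ⟨permV_negK f, fun i hi => ?_⟩
      have hine : i ≠ 0 := hi
      set p := i.pred hine with hp
      have hip : i = p.succ := (Fin.succ_pred i hine).symm
      rw [hip, permV_succ]
      exact hs _ (Fin.succ_ne_zero _)
  have key : ∀ y, y ∈ AddSubmonoid.closure (gen x) →
      permV f y ∈ AddSubmonoid.closure (gen (permV f x)) := by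
    intro y hy
    induction hy using AddSubmonoid.closure_induction with
    | mem z hz => exact AddSubmonoid.subset_closure (himg z hz)
    | zero => rw [permV_zero_vec]; exact zero_mem _
    | add y z _ _ hy hz => rw [permV_add]; exact add_mem hy hz
  exact key x hx

end DP9

namespace DP9
open DP

/-- the line through points 1,2 -/
def vL : V9 := fun p => if p.val = 0 then 1 else if p.val ≤ 2 then -1 else 0
/-- the conic through points 1..5 -/
def vQ : V9 := fun p => if p.val = 0 then 2 else if p.val ≤ 5 then -1 else 0
/-- the cubic with double point at 1 through 2..7 -/
def vC : V9 := fun p => if p.val = 0 then 3 else if p.val = 1 then -2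
  else if p.val ≤ 7 then -1 else 0

lemma isExc_vL : IsExc vL := ⟨by decide, by decide⟩
lemma isExc_vQ : IsExc vQ := ⟨by decide, by decide⟩
lemma isExc_vC : IsExc vC := ⟨by decide, by decide⟩

end DP9

namespace DP9
open DP

lemma step_mem {D E : V9} (hE : E ∈ gen D)
    (hsupp : ∀ i : Fin 9, i ≠ 0 → D i = 0 → (D - E) i = 0)
    (hmem : D - E ∈ AddSubmonoid.closure (gen (D - E))) :
    D ∈ AddSubmonoid.closure (gen D) := by
  have h2 : D - E ∈ AddSubmonoid.closure (gen D) :=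
    AddSubmonoid.closure_mono (gen_mono hsupp) hmem
  have h3 : E + (D - E) = D := by abel
  have h4 : E + (D - E) ∈ AddSubmonoid.closure (gen D) :=
    add_mem (AddSubmonoid.subset_closure hE) h2
  rwa [h3] at h4

lemma reg_permV (f : Equiv.Perm (Fin 8)) {D : V9} (h : Reg D) : Reg (permV f D) := by
  constructor
  · intro i hi
    rw [← Fin.succ_pred i hi, permV_succ]
    exact h.1 _ (Fin.succ_ne_zero _)
  · intro i j k hi hj hk hij hik hjk
    have key : ∀ p q : Fin 9, (hp : p ≠ 0) → (hq : q ≠ 0) → p ≠ q →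
        (f (p.pred hp)).succ ≠ (f (q.pred hq)).succ := by
      intro p q hp hq hpq hcon
      apply hpq
      have h1 : f (p.pred hp) = f (q.pred hq) := Fin.succ_injective _ hcon
      have h2 : p.pred hp = q.pred hq := f.injective h1
      rw [← Fin.succ_pred p hp, ← Fin.succ_pred q hq, h2]
    have e0 : permV f D 0 = D 0 := rfl
    rw [e0, ← Fin.succ_pred i hi, ← Fin.succ_pred j hj, ← Fin.succ_pred k hk,
      permV_succ, permV_succ, permV_succ]
    exact h.2 _ _ _ (Fin.succ_ne_zero _) (Fin.succ_ne_zero _) (Fin.succ_ne_zero _)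
      (key i j hi hj hij) (key i k hi hk hik) (key j k hj hk hjk)

/-- reduction of the triple condition to ordered triples -/
lemma reg2_of_ord {D : V9}
    (h : ∀ i j k : Fin 9, 0 < i.val → i.val < j.val → j.val < k.val →
      0 ≤ D 0 + D i + D j + D k) :
    ∀ i j k : Fin 9, i ≠ 0 → j ≠ 0 → k ≠ 0 → i ≠ j → i ≠ k → j ≠ k →
      0 ≤ D 0 + D i + D j + D k := by
  intro i j k hi hj hk hij hik hjk
  have vi : 0 < i.val := Fin.pos_iff_ne_zero.mpr hi
  have vj : 0 < j.val := Fin.pos_iff_ne_zero.mpr hj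
  have vk : 0 < k.val := Fin.pos_iff_ne_zero.mpr hk
  have vij : i.val ≠ j.val := fun h' => hij (Fin.ext h')
  have vik : i.val ≠ k.val := fun h' => hik (Fin.ext h')
  have vjk : j.val ≠ k.val := fun h' => hjk (Fin.ext h')
  rcases Nat.lt_or_ge i.val j.val with h1 | h1 <;>
  rcases Nat.lt_or_ge i.val k.val with h2 | h2 <;>
  rcases Nat.lt_or_ge j.val k.val with h3 | h3
  · linarith [h i j k vi h1 h3]
  · linarith [h i k j vi (by omega) (by omega)]
  · exact absurd rfl (by omega : ¬ (0:ℕ) = 0)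
  · linarith [h k i j vk (by omega) (by omega)]
  · linarith [h j i k vj (by omega) (by omega)]
  · exact absurd rfl (by omega : ¬ (0:ℕ) = 0)
  · linarith [h j k i vj (by omega) (by omega)]
  · linarith [h k j i vk (by omega) (by omega)]

/-- triple condition from almost-uniform lower bounds -/
lemma reg2_of_bounds {D : V9} (w : Fin 9) (lb lb' : ℤ) (hww : lb' ≤ lb)
    (hlb : ∀ i : Fin 9, i ≠ 0 → i ≠ w → lb ≤ D i) (hw : lb' ≤ D w)
    (hsum : 0 ≤ D 0 + 2 * lb + lb') :
    ∀ i j k : Fin 9, i ≠ 0 → j ≠ 0 → k ≠ 0 → i ≠ j → i ≠ k → j ≠ k →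
      0 ≤ D 0 + D i + D j + D k := by
  intro i j k hi hj hk hij hik hjk
  by_cases hiw : i = w
  · subst hiw
    have := hlb j hj (Ne.symm hij)
    have := hlb k hk (Ne.symm hik)
    linarith
  · by_cases hjw : j = w
    · subst hjw
      have := hlb i hi hiw
      have := hlb k hk (fun h => hjk h.symm)
      linarith
    · by_cases hkw : k = w
      · subst hkw
        have := hlb i hi hiw
        have := hlb j hj hjw
        linarith
      · have := hlb i hi hiw
        have := hlb j hj hjw
        have := hlb k hk hkw
        linarith

lemma terminal_gen_vL {D : V9} : vL ∈ gen D := by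
  left
  refine ⟨isExc_vL, fun i hi h0 => ?_⟩
  simp only [vL]
  rw [if_neg (by omega), if_neg (by omega)]

lemma terminal_gen_l1 {D : V9} : (l 1 : V9) ∈ gen D := by
  left
  refine ⟨isExc_l 1 (by decide), fun i hi h0 => ?_⟩
  simp only [l]
  rw [if_neg]
  intro h; subst h; simp at hi

lemma terminal_gen_l2 {D : V9} : (l 2 : V9) ∈ gen D := by
  left
  refine ⟨isExc_l 2 (by decide), fun i hi h0 => ?_⟩
  simp only [l]
  rw [if_neg]
  intro h; subst h; simp at hi

lemma term_small {D : V9} (hreg : Reg D) (hsm : ∀ i : Fin 9, 2 < i.val → D i = 0) :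
    D ∈ AddSubmonoid.closure (gen D) := by
  have hd1 : D 1 ≤ 0 := hreg.1 1 (by decide)
  have hd2 : D 2 ≤ 0 := hreg.1 2 (by decide)
  have h3 : D 3 = 0 := hsm 3 (by decide)
  have h4 : D 4 = 0 := hsm 4 (by decide)
  have h5 : D 5 = 0 := hsm 5 (by decide)
  have h6 : D 6 = 0 := hsm 6 (by decide)
  have h7 : D 7 = 0 := hsm 7 (by decide)
  have h8 : D 8 = 0 := hsm 8 (by decide)
  have htri : 0 ≤ D 0 + D 1 + D 2 + D 3 := hreg.2 1 2 3 (by decide) (by decide)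
    (by decide) (by decide) (by decide) (by decide)
  obtain ⟨A, hA⟩ := Int.eq_ofNat_of_zero_le (a := D 0) (by omega)
  obtain ⟨B, hB⟩ := Int.eq_ofNat_of_zero_le (a := D 0 + D 1) (by omega)
  obtain ⟨C, hC⟩ := Int.eq_ofNat_of_zero_le (a := D 0 + D 2) (by omega)
  have hDeq : D = A • vL + B • (l 1 : V9) + C • (l 2 : V9) := by
    funext i
    fin_cases i <;>
      simp [Pi.add_apply, Pi.smul_apply, nsmul_eq_mul, vL, l, Fin.ext_iff] <;>
      omega
  rw [hDeq]
  exact add_mem (add_mem (nsmul_mem (AddSubmonoid.subset_closure terminal_gen_vL) A)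
    (nsmul_mem (AddSubmonoid.subset_closure terminal_gen_l1) B))
    (nsmul_mem (AddSubmonoid.subset_closure terminal_gen_l2) C)

end DP9

namespace DP9
open DP

lemma term_single {D : V9} (hreg : Reg D) (s : Fin 9) (hs3 : 2 < s.val) (hDs : D s ≠ 0)
    (hone : ∀ j : Fin 9, j ≠ 0 → j ≠ s → D j = 0) :
    D ∈ AddSubmonoid.closure (gen D) := by
  have hsne : s ≠ 0 := by intro h; subst h; simp at hs3
  have hs1 : (1 : Fin 9) ≠ s := by intro h; rw [← h] at hs3; simp at hs3
  have hs2 : (2 : Fin 9) ≠ s := by intro h; rw [← h] at hs3; simp at hs3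
  have hd1 : D 1 = 0 := hone 1 (by decide) hs1
  have hd2 : D 2 = 0 := hone 2 (by decide) hs2
  have hds : D s ≤ 0 := hreg.1 s hsne
  have hpair : 0 ≤ D 0 + D s + D 1 + D 2 :=
    hreg.2 s 1 2 hsne (by decide) (by decide) (Ne.symm hs1) (Ne.symm hs2) (by decide)
  obtain ⟨A, hA⟩ := Int.eq_ofNat_of_zero_le (a := D 0) (by omega)
  obtain ⟨B, hB⟩ := Int.eq_ofNat_of_zero_le (a := D 0 + D s) (by omega)
  set w : V9 := l 0 - l 1 - l s with hw
  have hwexc : IsExc w := isExc_L 1 s (by decide) hsne hs1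
  have hwgen : w ∈ gen D := by
    left
    refine ⟨hwexc, fun i hi h0 => ?_⟩
    have hine : i ≠ 0 := by intro h; subst h; simp at hi
    have hi1 : i ≠ 1 := by intro h; subst h; simp at hi
    have his : i ≠ s := by intro h; subst h; exact hDs h0
    simp [hw, l, hine, hi1, his, Ne.symm hine]
  have hlsgen : (l s : V9) ∈ gen D := by
    left
    refine ⟨isExc_l s hsne, fun i hi h0 => ?_⟩
    have his : i ≠ s := by intro h; subst h; exact hDs h0
    simp [l, his]
  have hl1gen : (l 1 : V9) ∈ gen D := terminal_gen_l1
  have hDeq : D = A • w + A • (l 1 : V9) + B • (l s : V9) := by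
    funext i
    simp only [Pi.add_apply, Pi.smul_apply, Pi.sub_apply, smul_eq_mul, nsmul_eq_mul, hw]
    by_cases hi0 : i = 0
    · subst hi0
      simp [l, Ne.symm hsne, (by decide : (0:Fin 9) ≠ 1)]
      omega
    · by_cases hi1 : i = 1
      · subst hi1
        simp [l, hs1, (by decide : (1:Fin 9) ≠ 0)]
        omega
      · by_cases his : i = s
        · subst his
          simp [l, hi0, hi1]
          omega
        · simp [l, hi0, hi1, his]
          exact hone i hi0 his
  have hmem : A • w + A • (l 1 : V9) + B • (l s : V9) ∈ AddSubmonoid.closure (gen D) :=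
    add_mem (add_mem (nsmul_mem (AddSubmonoid.subset_closure hwgen) A)
      (nsmul_mem (AddSubmonoid.subset_closure hl1gen) A))
      (nsmul_mem (AddSubmonoid.subset_closure hlsgen) B)
  rwa [← hDeq] at hmem

end DP9

namespace DP9
open DP

lemma vpos {i : Fin 9} (h : i ≠ 0) : 0 < i.val := by
  rcases Nat.eq_zero_or_pos i.val with h0 | h0
  · exact absurd (Fin.ext (by simp [h0])) h
  · exact h0

lemma vL_lo {i : Fin 9} (h1 : 0 < i.val) (h2 : i.val ≤ 2) : vL i = -1 := by
  simp only [vL]; rw [if_neg (by omega), if_pos (by omega)]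
lemma vL_hi {i : Fin 9} (h : 2 < i.val) : vL i = 0 := by
  simp only [vL]; rw [if_neg (by omega), if_neg (by omega)]
lemma vQ_lo {i : Fin 9} (h1 : 0 < i.val) (h2 : i.val ≤ 5) : vQ i = -1 := by
  simp only [vQ]; rw [if_neg (by omega), if_pos (by omega)]
lemma vQ_hi {i : Fin 9} (h : 5 < i.val) : vQ i = 0 := by
  simp only [vQ]; rw [if_neg (by omega), if_neg (by omega)]
lemma vC_mid {i : Fin 9} (h1 : 1 < i.val) (h2 : i.val ≤ 7) : vC i = -1 := by
  simp only [vC]; rw [if_neg (by omega), if_neg (by omega), if_pos (by omega)]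
lemma vC_hi {i : Fin 9} (h : 7 < i.val) : vC i = 0 := by
  simp only [vC]; rw [if_neg (by omega), if_neg (by omega), if_neg (by omega)]

section branch
variable {T : V9} (hmono : ∀ i j : Fin 9, 0 < i.val → i.val ≤ j.val → T i ≤ T j)
  (hreg : Reg T)

include hmono hreg in
lemma regL (hb : 0 ≤ T 0 - 1 + T 3 + T 4 + T 5) (h3 : T 3 ≤ -1) : Reg (T - vL) := by
  have v1 : (1 : Fin 9).val = 1 := by decide
  have v2 : (2 : Fin 9).val = 2 := by decide
  have v3 : (3 : Fin 9).val = 3 := by decide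
  have v4 : (4 : Fin 9).val = 4 := by decide
  have v5 : (5 : Fin 9).val = 5 := by decide
  constructor
  · intro i hi
    have hiv : 0 < i.val := vpos hi
    by_cases hv : i.val ≤ 2
    · have := hmono i 3 hiv (by omega)
      rw [Pi.sub_apply, vL_lo hiv hv]
      omega
    · have := hreg.1 i hi
      rw [Pi.sub_apply, vL_hi (by omega)]
      omega
  · apply reg2_of_ord
    intro i j k hi hij hjk
    have e0 : (T - vL) 0 = T 0 - 1 := by
      rw [Pi.sub_apply, (by decide : vL 0 = 1)]
    have hk3 : 2 < k.val := by omega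
    have ek : (T - vL) k = T k := by rw [Pi.sub_apply, vL_hi hk3, sub_zero]
    by_cases hi1 : i.val = 1
    · have hieq : i = 1 := Fin.ext (by omega)
      subst hieq
      have ei : (T - vL) 1 = T 1 + 1 := by
        rw [Pi.sub_apply, (by decide : vL 1 = -1)]; ring
      by_cases hj2 : j.val = 2
      · have hjeq : j = 2 := Fin.ext (by omega)
        subst hjeq
        have ej : (T - vL) 2 = T 2 + 1 := by
          rw [Pi.sub_apply, (by decide : vL 2 = -1)]; ring
        have hT12 := hreg.2 1 2 3 (by decide) (by decide) (by decide) (by decide)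
          (by decide) (by decide)
        have := hmono 3 k (by omega) (by omega)
        rw [e0, ei, ej, ek]; omega
      · have hj3 : 2 < j.val := by omega
        have ej : (T - vL) j = T j := by rw [Pi.sub_apply, vL_hi hj3, sub_zero]
        have hT134 := hreg.2 1 3 4 (by decide) (by decide) (by decide) (by decide)
          (by decide) (by decide)
        have := hmono 3 j (by omega) (by omega)
        have := hmono 4 k (by omega) (by omega)
        rw [e0, ei, ej, ek]; omega
    · by_cases hi2 : i.val = 2
      · have hieq : i = 2 := Fin.ext (by omega)
        subst hieq
        have ei : (T - vL) 2 = T 2 + 1 := by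
          rw [Pi.sub_apply, (by decide : vL 2 = -1)]; ring
        have hj3 : 2 < j.val := by omega
        have ej : (T - vL) j = T j := by rw [Pi.sub_apply, vL_hi hj3, sub_zero]
        have hT234 := hreg.2 2 3 4 (by decide) (by decide) (by decide) (by decide)
          (by decide) (by decide)
        have := hmono 3 j (by omega) (by omega)
        have := hmono 4 k (by omega) (by omega)
        rw [e0, ei, ej, ek]; omega
      · have hi3 : 2 < i.val := by omega
        have ei : (T - vL) i = T i := by rw [Pi.sub_apply, vL_hi hi3, sub_zero]
        have hj3 : 2 < j.val := by omega
        have ej : (T - vL) j = T j := by rw [Pi.sub_apply, vL_hi hj3, sub_zero]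
        have := hmono 3 i (by omega) (by omega)
        have := hmono 4 j (by omega) (by omega)
        have := hmono 5 k (by omega) (by omega)
        rw [e0, ei, ej, ek]; omega

include hmono hreg in
lemma regQ (c : ℤ) (hc : 1 ≤ c) (he1 : T 1 = -c) (he5 : T 5 = -c)
    (hq : 1 - c ≤ T 7) (h0 : T 0 = 3 * c) : Reg (T - vQ) := by
  have v1 : (1 : Fin 9).val = 1 := by decide
  have v5 : (5 : Fin 9).val = 5 := by decide
  have v6 : (6 : Fin 9).val = 6 := by decide
  have v7 : (7 : Fin 9).val = 7 := by decide
  have hsand : ∀ i : Fin 9, 0 < i.val → i.val ≤ 5 → T i = -c := by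
    intro i h1 h5
    have := hmono 1 i (by omega) (by omega)
    have := hmono i 5 h1 (by omega)
    omega
  constructor
  · intro i hi
    have hiv : 0 < i.val := vpos hi
    by_cases hv : i.val ≤ 5
    · rw [Pi.sub_apply, vQ_lo hiv hv, hsand i hiv hv]; omega
    · have := hreg.1 i hi
      rw [Pi.sub_apply, vQ_hi (by omega)]; omega
  · apply reg2_of_bounds 6 (1 - c) (-c) (by omega)
    · intro i hi h6
      have hiv : 0 < i.val := vpos hi
      by_cases hv : i.val ≤ 5
      · rw [Pi.sub_apply, vQ_lo hiv hv, hsand i hiv hv]; omega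
      · have hi7 : 7 ≤ i.val := by
          rcases Nat.lt_or_ge i.val 7 with h | h
          · exfalso; exact h6 (Fin.ext (by omega))
          · exact h
        have := hmono 7 i (by omega) (by omega)
        rw [Pi.sub_apply, vQ_hi (by omega)]; omega
    · have := hmono 5 6 (by omega) (by omega)
      have := hreg.1 6 (by decide)
      rw [Pi.sub_apply, vQ_hi (by omega)]
      omega
    · have e0 : (T - vQ) 0 = T 0 - 2 := by
        rw [Pi.sub_apply, (by decide : vQ 0 = 2)]
      rw [e0]; omega

include hmono hreg in
lemma regC (c : ℤ) (hc : 2 ≤ c) (he1 : T 1 = -c) (he7 : T 7 = -c)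
    (hc8 : 1 - c ≤ T 8) (h0 : T 0 = 3 * c) : Reg (T - vC) := by
  have v1 : (1 : Fin 9).val = 1 := by decide
  have v7 : (7 : Fin 9).val = 7 := by decide
  have v8 : (8 : Fin 9).val = 8 := by decide
  have hsand : ∀ i : Fin 9, 0 < i.val → i.val ≤ 7 → T i = -c := by
    intro i h1 h7
    have := hmono 1 i (by omega) (by omega)
    have := hmono i 7 h1 (by omega)
    omega
  constructor
  · intro i hi
    have hiv : 0 < i.val := vpos hi
    by_cases h1 : i.val = 1
    · have hieq : i = 1 := by apply Fin.ext; rw [h1]; decide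
      subst hieq
      rw [Pi.sub_apply, (by decide : vC 1 = -2), he1]; omega
    · by_cases hv : i.val ≤ 7
      · rw [Pi.sub_apply, vC_mid (by omega) hv, hsand i hiv hv]; omega
      · have := hreg.1 i hi
        rw [Pi.sub_apply, vC_hi (by omega)]; omega
  · apply reg2_of_bounds 1 (1 - c) (1 - c) (by omega)
    · intro i hi h1
      have hiv : 0 < i.val := vpos hi
      have hi1 : i.val ≠ 1 := by
        intro h; exact h1 (Fin.ext (by omega))
      by_cases hv : i.val ≤ 7
      · rw [Pi.sub_apply, vC_mid (by omega) hv, hsand i hiv hv]; omega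
      · rw [Pi.sub_apply, vC_hi (by omega)]
        have : i = 8 := Fin.ext (by omega)
        subst this
        omega
    · rw [Pi.sub_apply, (by decide : vC 1 = -2), he1]; omega
    · have e0 : (T - vC) 0 = T 0 - 3 := by
        rw [Pi.sub_apply, (by decide : vC 0 = 3)]
      rw [e0]; omega

end branch
end DP9

namespace DP9
open DP

lemma lemC : ∀ n : ℕ, ∀ D : V9, Reg D → (D 0).toNat ≤ n →
    D ∈ AddSubmonoid.closure (gen D) := by
  intro n
  induction n with
  | zero =>
    intro D hreg hn
    have v1 : (1 : Fin 9).val = 1 := by decide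
    have v2 : (2 : Fin 9).val = 2 := by decide
    have v3 : (3 : Fin 9).val = 3 := by decide
    have hb1 := hreg.1 1 (by decide)
    have hb2 := hreg.1 2 (by decide)
    have hb3 := hreg.1 3 (by decide)
    have htri := hreg.2 1 2 3 (by decide) (by decide) (by decide) (by decide)
      (by decide) (by decide)
    have key : ∀ i : Fin 9, i ≠ 0 → D i = 0 := by
      intro i hi
      have hiv := vpos hi
      have hbi := hreg.1 i hi
      by_cases e1 : i.val = 1
      · have h23 : i ≠ 2 := by intro h; subst h; omega
        have h33 : i ≠ 3 := by intro h; subst h; omega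
        have := hreg.2 i 2 3 hi (by decide) (by decide) h23 h33 (by decide)
        omega
      · by_cases e2 : i.val = 2
        · have h13 : i ≠ 1 := by intro h; subst h; omega
          have h33 : i ≠ 3 := by intro h; subst h; omega
          have := hreg.2 i 1 3 hi (by decide) (by decide) h13 h33 (by decide)
          omega
        · have h13 : i ≠ 1 := by intro h; subst h; omega
          have h23 : i ≠ 2 := by intro h; subst h; omega
          have := hreg.2 i 1 2 hi (by decide) (by decide) h13 h23 (by decide)
          omega
    have hD0 : D = 0 := by
      funext i
      by_cases hi : i = 0
      · subst hi; simp; omega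
      · simpa using key i hi
    rw [hD0]
    exact zero_mem _
  | succ n ih =>
    intro D hreg hn
    by_cases hsm : ∀ i : Fin 9, 2 < i.val → D i = 0
    · exact term_small hreg hsm
    push_neg at hsm
    obtain ⟨s, hs3, hsval⟩ := hsm
    have hsne : s ≠ 0 := by
      intro h; subst h; simp at hs3
    by_cases hone : ∀ j : Fin 9, j ≠ 0 → j ≠ s → D j = 0
    · exact term_single hreg s hs3 hsval hone
    push_neg at hone
    obtain ⟨j0, hj0ne, hj0s, hj0val⟩ := hone
    -- sort coordinates 1..8
    set g : Fin 8 → ℤ := fun p => D p.succ with hg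
    set e : Equiv.Perm (Fin 8) := Tuple.sort g with he
    set T : V9 := permV e D with hT
    have hmono8 : Monotone (g ∘ e) := Tuple.monotone_sort g
    have hMono : ∀ i j : Fin 9, 0 < i.val → i.val ≤ j.val → T i ≤ T j := by
      intro i j h1 h2
      have hine : i ≠ 0 := by
        intro h; subst h; simp at h1
      have hjne : j ≠ 0 := by
        intro h; subst h; simp at h2; omega
      rw [← Fin.succ_pred i hine, ← Fin.succ_pred j hjne]
      show (g ∘ ⇑e) (i.pred hine) ≤ (g ∘ ⇑e) (j.pred hjne)
      apply hmono8
      have hpi : (i.pred hine).val = i.val - 1 := rfl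
      have hpj : (j.pred hjne).val = j.val - 1 := rfl
      rw [Fin.le_def]
      omega
    have hRegT : Reg T := reg_permV e hreg
    have hT0 : T 0 = D 0 := rfl
    have hpre : ∀ (s' : Fin 9) (hs' : s' ≠ 0), T ((e.symm (s'.pred hs')).succ) = D s' := by
      intro s' hs'
      show D ((e (e.symm (s'.pred hs'))).succ) = D s'
      rw [Equiv.apply_symm_apply, Fin.succ_pred]
    set p : Fin 8 := e.symm (s.pred hsne) with hp
    set q : Fin 8 := e.symm (j0.pred hj0ne) with hq
    have hpv : T p.succ = D s := hpre s hsne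
    have hqv : T q.succ = D j0 := hpre j0 hj0ne
    have hpq : p ≠ q := by
      intro hcon
      apply hj0s
      have h1 : s.pred hsne = j0.pred hj0ne := e.symm.injective hcon
      have h2 : (s.pred hsne).succ = (j0.pred hj0ne).succ := by rw [h1]
      rw [Fin.succ_pred, Fin.succ_pred] at h2
      exact h2.symm
    have hDs : D s < 0 := lt_of_le_of_ne (hreg.1 s hsne) hsval
    have hDj0 : D j0 < 0 := lt_of_le_of_ne (hreg.1 j0 hj0ne) hj0val
    have hT1 : T 1 < 0 := by
      have hv : (p.succ).val = p.val + 1 := rfl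
      have := hMono 1 p.succ (by decide) (by rw [hv]; have := (1:Fin 9).val; omega)
      omega
    have hT2 : T 2 < 0 := by
      have hvp : (p.succ).val = p.val + 1 := rfl
      have hvq : (q.succ).val = q.val + 1 := rfl
      have hv2 : (2 : Fin 9).val = 2 := by decide
      have hpqv : p.val ≠ q.val := by
        intro h; exact hpq (Fin.ext h)
      by_cases h0 : p.val = 0
      · have := hMono 2 q.succ (by decide) (by omega)
        omega
      · have := hMono 2 p.succ (by decide) (by omega)
        omega
    -- transfer back
    have hfin : T ∈ AddSubmonoid.closure (gen T) → D ∈ AddSubmonoid.closure (gen D) := by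
      intro hmem
      have htrans := permV_closure e⁻¹ T (by omega) (by omega) hmem
      rw [hT, permV_inv] at htrans
      exact htrans
    apply hfin
    -- scalar facts about the sorted vector
    have v1 : (1 : Fin 9).val = 1 := by decide
    have v2 : (2 : Fin 9).val = 2 := by decide
    have v3 : (3 : Fin 9).val = 3 := by decide
    have v4 : (4 : Fin 9).val = 4 := by decide
    have v5 : (5 : Fin 9).val = 5 := by decide
    have v6 : (6 : Fin 9).val = 6 := by decide
    have v7 : (7 : Fin 9).val = 7 := by decide
    have v8 : (8 : Fin 9).val = 8 := by decide
    have m12 : T 1 ≤ T 2 := hMono 1 2 (by omega) (by omega)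
    have m23 : T 2 ≤ T 3 := hMono 2 3 (by omega) (by omega)
    have m34 : T 3 ≤ T 4 := hMono 3 4 (by omega) (by omega)
    have m45 : T 4 ≤ T 5 := hMono 4 5 (by omega) (by omega)
    have m56 : T 5 ≤ T 6 := hMono 5 6 (by omega) (by omega)
    have m67 : T 6 ≤ T 7 := hMono 6 7 (by omega) (by omega)
    have m78 : T 7 ≤ T 8 := hMono 7 8 (by omega) (by omega)
    have h8 : T 8 ≤ 0 := hRegT.1 8 (by decide)
    have htri : 0 ≤ T 0 + T 1 + T 2 + T 3 := hRegT.2 1 2 3 (by decide) (by decide)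
      (by decide) (by decide) (by decide) (by decide)
    have hTn : (T 0).toNat ≤ n + 1 := by rw [hT0]; exact hn
    by_cases hd3 : T 3 = 0
    · apply term_small hRegT
      intro i hi
      have hine : i ≠ 0 := by intro h; subst h; simp at hi
      have := hMono 3 i (by omega) (by omega)
      have := hRegT.1 i hine
      omega
    have h3 : T 3 ≤ -1 := by
      have := hRegT.1 3 (by decide); omega
    by_cases hb : 0 ≤ T 0 - 1 + T 3 + T 4 + T 5
    · -- subtract the line vL
      have hreg' : Reg (T - vL) := regL hMono hRegT hb h3
      have hsupp : ∀ i : Fin 9, i ≠ 0 → T i = 0 → (T - vL) i = 0 := by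
        intro i hi h0
        have hiv := vpos hi
        by_cases hv : i.val ≤ 2
        · exfalso
          have := hMono i 3 hiv (by omega)
          omega
        · rw [Pi.sub_apply, vL_hi (by omega), h0, sub_zero]
      have hdec : ((T - vL) 0).toNat ≤ n := by
        have e0 : (T - vL) 0 = T 0 - 1 := by
          rw [Pi.sub_apply, (by decide : vL 0 = 1)]
        omega
      exact step_mem terminal_gen_vL hsupp (ih (T - vL) hreg' hdec)
    push_neg at hb
    set c : ℤ := -T 1 with hcdef
    have he1 : T 1 = -c := by omega
    have he2 : T 2 = -c := by omega
    have he3 : T 3 = -c := by omega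
    have he4 : T 4 = -c := by omega
    have he5 : T 5 = -c := by omega
    have h0c : T 0 = 3 * c := by omega
    have hcge1 : 1 ≤ c := by omega
    by_cases hq : 1 - c ≤ T 7
    · -- subtract the conic vQ
      have hreg' : Reg (T - vQ) := regQ hMono hRegT c hcge1 he1 he5 hq h0c
      have hzero_high : ∀ i : Fin 9, i ≠ 0 → T i = 0 → 5 < i.val := by
        intro i hi h0
        have hiv := vpos hi
        by_cases hv : i.val ≤ 5
        · exfalso
          have := hMono 1 i (by omega) (by omega)
          have := hMono i 5 hiv (by omega)
          omega
        · omega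
      have hgenQ : vQ ∈ gen T := by
        left
        refine ⟨isExc_vQ, fun i hi h0 => ?_⟩
        have hine : i ≠ 0 := by intro h; subst h; simp at hi
        exact vQ_hi (hzero_high i hine h0)
      have hsupp : ∀ i : Fin 9, i ≠ 0 → T i = 0 → (T - vQ) i = 0 := by
        intro i hi h0
        rw [Pi.sub_apply, vQ_hi (hzero_high i hi h0), h0, sub_zero]
      have hdec : ((T - vQ) 0).toNat ≤ n := by
        have e0 : (T - vQ) 0 = T 0 - 2 := by
          rw [Pi.sub_apply, (by decide : vQ 0 = 2)]
        omega
      exact step_mem hgenQ hsupp (ih (T - vQ) hreg' hdec)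
    push_neg at hq
    have he6 : T 6 = -c := by omega
    have he7 : T 7 = -c := by omega
    have hzero_top : ∀ i : Fin 9, i ≠ 0 → T i = 0 → 7 < i.val := by
      intro i hi h0
      have hiv := vpos hi
      by_cases hv : i.val ≤ 7
      · exfalso
        have := hMono 1 i (by omega) (by omega)
        have := hMono i 7 hiv (by omega)
        omega
      · omega
    have hgenC : vC ∈ gen T := by
      left
      refine ⟨isExc_vC, fun i hi h0 => ?_⟩
      have hine : i ≠ 0 := by intro h; subst h; simp at hi
      exact vC_hi (hzero_top i hine h0)
    by_cases hc8 : 1 - c ≤ T 8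
    · by_cases hc2 : 2 ≤ c
      · -- subtract the cubic vC
        have hreg' : Reg (T - vC) := regC hMono hRegT c hc2 he1 he7 hc8 h0c
        have hsupp : ∀ i : Fin 9, i ≠ 0 → T i = 0 → (T - vC) i = 0 := by
          intro i hi h0
          rw [Pi.sub_apply, vC_hi (hzero_top i hi h0), h0, sub_zero]
        have hdec : ((T - vC) 0).toNat ≤ n := by
          have e0 : (T - vC) 0 = T 0 - 3 := by
            rw [Pi.sub_apply, (by decide : vC 0 = 3)]
          omega
        exact step_mem hgenC hsupp (ih (T - vC) hreg' hdec)
      · -- c = 1 : T = vC + l 1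
        have hc1 : c = 1 := by omega
        have he8 : T 8 = 0 := by omega
        have heq : T = vC + (l 1 : V9) := by
          funext i
          rw [Pi.add_apply]
          by_cases hi0 : i = 0
          · subst hi0
            rw [(by decide : vC 0 = 3), (by decide : (l 1 : V9) 0 = 0)]
            omega
          by_cases hi1 : i = 1
          · subst hi1
            rw [(by decide : vC 1 = -2), (by decide : (l 1 : V9) 1 = 1)]
            omega
          have hiv := vpos hi0
          have hv1 : i.val ≠ 1 := by
            intro h; exact hi1 (by apply Fin.ext; rw [h]; decide)
          have hl : (l 1 : V9) i = 0 := by simp [l, hi1]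
          by_cases hv : i.val ≤ 7
          · rw [vC_mid (by omega) hv, hl]
            have := hMono 1 i (by omega) (by omega)
            have := hMono i 7 hiv (by omega)
            omega
          · rw [vC_hi (by omega), hl]
            have hi8 : i = 8 := by
              apply Fin.ext
              have := i.isLt
              omega
            rw [hi8]
            omega
        have hmem : vC + (l 1 : V9) ∈ AddSubmonoid.closure (gen T) :=
          add_mem (AddSubmonoid.subset_closure hgenC)
            (AddSubmonoid.subset_closure terminal_gen_l1)
        rwa [← heq] at hmem
    · -- all coordinates equal : T = c • negK
      push_neg at hc8
      have he8 : T 8 = -c := by omega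
      have hfull : ∀ i : Fin 9, i ≠ 0 → T i ≠ 0 := by
        intro i hi
        have hiv := vpos hi
        have hi8 : i.val ≤ 8 := by have := i.isLt; omega
        have := hMono 1 i (by omega) (by omega)
        have := hMono i 8 hiv (by omega)
        omega
      have hgenK : negK ∈ gen T := Or.inr ⟨rfl, hfull⟩
      have heq : T = c.toNat • negK := by
        funext i
        rw [Pi.smul_apply]
        by_cases hi0 : i = 0
        · subst hi0
          rw [(by rfl : (negK : V9) 0 = 3)]
          simp only [nsmul_eq_mul]
          omega
        · have hiv := vpos hi0
          have hi8 : i.val ≤ 8 := by have := i.isLt; omega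
          have hnK : (negK : V9) i = -1 := by simp [negK, hi0]
          rw [hnK]
          simp only [nsmul_eq_mul]
          have := hMono 1 i (by omega) (by omega)
          have := hMono i 8 hiv (by omega)
          omega
      have hmem : c.toNat • negK ∈ AddSubmonoid.closure (gen T) :=
        nsmul_mem (AddSubmonoid.subset_closure hgenK) _
      rwa [← heq] at hmem

end DP9

namespace DP
variable {r : ℕ}

lemma reg_facts (hr3 : 3 ≤ r) {D : Fin (r+1) → ℤ} (hreg : Reg D) :
    0 ≤ D 0 ∧ (∀ i : Fin (r+1), i ≠ 0 → 0 ≤ D 0 + D i) ∧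
    (∀ i j : Fin (r+1), i ≠ 0 → j ≠ 0 → i ≠ j → 0 ≤ D 0 + D i + D j) := by
  set i1 : Fin (r+1) := ⟨1, by omega⟩ with hi1
  set i2 : Fin (r+1) := ⟨2, by omega⟩ with hi2
  set i3 : Fin (r+1) := ⟨3, by omega⟩ with hi3
  have h1ne : i1 ≠ 0 := by simp [hi1, Fin.ext_iff]
  have h2ne : i2 ≠ 0 := by simp [hi2, Fin.ext_iff]
  have h3ne : i3 ≠ 0 := by simp [hi3, Fin.ext_iff]
  have h12 : i1 ≠ i2 := by simp [hi1, hi2, Fin.ext_iff]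
  have h13 : i1 ≠ i3 := by simp [hi1, hi3, Fin.ext_iff]
  have h23 : i2 ≠ i3 := by simp [hi2, hi3, Fin.ext_iff]
  have hb1 := hreg.1 i1 h1ne
  have hb2 := hreg.1 i2 h2ne
  have hb3 := hreg.1 i3 h3ne
  have htri := hreg.2 i1 i2 i3 h1ne h2ne h3ne h12 h13 h23
  have hpair : ∀ i j : Fin (r+1), i ≠ 0 → j ≠ 0 → i ≠ j → 0 ≤ D 0 + D i + D j := by
    intro i j hi hj hij
    by_cases hc1 : i ≠ i1 ∧ j ≠ i1
    · have := hreg.2 i j i1 hi hj h1ne hij hc1.1 hc1.2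
      have := hreg.1 i1 h1ne
      omega
    · by_cases hc2 : i ≠ i2 ∧ j ≠ i2
      · have := hreg.2 i j i2 hi hj h2ne hij hc2.1 hc2.2
        have := hreg.1 i2 h2ne
        omega
      · push_neg at hc1 hc2
        have hcc1 : i = i1 ∨ j = i1 := by
          by_cases h : i = i1
          · exact Or.inl h
          · exact Or.inr (hc1 h)
        have hcc2 : i = i2 ∨ j = i2 := by
          by_cases h : i = i2
          · exact Or.inl h
          · exact Or.inr (hc2 h)
        have hij3 : i ≠ i3 ∧ j ≠ i3 := by
          rcases hcc1 with h | h <;> rcases hcc2 with h' | h'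
          · exact absurd (h.symm.trans h') h12
          · subst h; subst h'; exact ⟨h13, h23⟩
          · subst h; subst h'; exact ⟨h23, h13⟩
          · exact absurd (h.symm.trans h') h12
        have := hreg.2 i j i3 hi hj h3ne hij hij3.1 hij3.2
        have := hreg.1 i3 h3ne
        omega
  refine ⟨by omega, fun i hi => ?_, hpair⟩
  by_cases h : i ≠ i1 ∧ i ≠ i2
  · have := hpair i i1 hi h1ne h.1
    have := hpair i i2 hi h2ne h.2
    omega
  · push_neg at h
    by_cases h' : i = i1
    · have := hpair i i2 hi h2ne (h' ▸ h12)
      omega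
    · have h'' : i = i2 := h h'
      have := hpair i i1 hi h1ne (h'' ▸ h12.symm)
      omega

lemma r2case (D : Fin 3 → ℤ) (hnef : ∀ E : Fin 3 → ℤ, IsExc E → 0 ≤ dpB D E) :
    D ∈ AddSubmonoid.closure {E : Fin 3 → ℤ | IsExc E} := by
  have h1 : (1 : Fin 3) ≠ 0 := by decide
  have h2 : (2 : Fin 3) ≠ 0 := by decide
  have h12 : (1 : Fin 3) ≠ 2 := by decide
  have hb1 := nef_nonpos hnef 1 h1
  have hb2 := nef_nonpos hnef 2 h2
  have hLexc : IsExc (l 0 - l 1 - l 2 : Fin 3 → ℤ) := isExc_L 1 2 h1 h2 h12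
  have hL := hnef _ hLexc
  rw [dpB_L_val D 1 2 h1 h2] at hL
  obtain ⟨A, hA⟩ := Int.eq_ofNat_of_zero_le (a := D 0) (by omega)
  obtain ⟨B, hB⟩ := Int.eq_ofNat_of_zero_le (a := D 0 + D 1) (by omega)
  obtain ⟨C, hC⟩ := Int.eq_ofNat_of_zero_le (a := D 0 + D 2) (by omega)
  have hDeq : D = A • (l 0 - l 1 - l 2 : Fin 3 → ℤ) + B • (l 1 : Fin 3 → ℤ)
      + C • (l 2 : Fin 3 → ℤ) := by
    funext i
    simp only [Pi.add_apply, Pi.smul_apply, Pi.sub_apply, nsmul_eq_mul]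
    fin_cases i <;> simp [l] <;> omega
  have m1 : (l 0 - l 1 - l 2 : Fin 3 → ℤ) ∈ {E : Fin 3 → ℤ | IsExc E} := hLexc
  have m2 : (l 1 : Fin 3 → ℤ) ∈ {E : Fin 3 → ℤ | IsExc E} := isExc_l 1 h1
  have m3 : (l 2 : Fin 3 → ℤ) ∈ {E : Fin 3 → ℤ | IsExc E} := isExc_l 2 h2
  have hmem : A • (l 0 - l 1 - l 2 : Fin 3 → ℤ) + B • (l 1 : Fin 3 → ℤ)
      + C • (l 2 : Fin 3 → ℤ) ∈ AddSubmonoid.closure {E : Fin 3 → ℤ | IsExc E} :=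
    add_mem (add_mem (nsmul_mem (AddSubmonoid.subset_closure m1) A)
      (nsmul_mem (AddSubmonoid.subset_closure m2) B))
      (nsmul_mem (AddSubmonoid.subset_closure m3) C)
  rwa [← hDeq] at hmem

end DP

namespace DPGLUE
open DP DP9

variable {r : ℕ}

def ext9 (hr7 : r ≤ 7) (D : Fin (r+1) → ℤ) : V9 :=
  fun j => if hj : j.val < r + 1 then D ⟨j.val, hj⟩ else 0

def trunc (hr7 : r ≤ 7) (x : V9) : Fin (r+1) → ℤ :=
  fun i => x ⟨i.val, by omega⟩

lemma trunc_ext (hr7 : r ≤ 7) (D : Fin (r+1) → ℤ) : trunc hr7 (ext9 hr7 D) = D := by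
  funext i
  simp only [trunc, ext9]
  rw [dif_pos i.isLt]

lemma trunc_add (hr7 : r ≤ 7) (x y : V9) :
    trunc hr7 (x + y) = trunc hr7 x + trunc hr7 y := rfl

lemma trunc_zero (hr7 : r ≤ 7) : trunc hr7 (0 : V9) = 0 := rfl

lemma dpB_trunc (hr7 : r ≤ 7) (x y : V9) (hx : ∀ i : Fin 9, r < i.val → x i = 0) :
    dpB (trunc hr7 x) (trunc hr7 y) = dpB x y := by
  unfold dpB
  have h0 : trunc hr7 x 0 = x 0 := by
    simp only [trunc]
    congr 1
  have h0' : trunc hr7 y 0 = y 0 := by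
    simp only [trunc]
    congr 1
  rw [h0, h0']
  congr 1
  -- sum transfer
  set ι : Fin r ↪ Fin 8 := ⟨fun i => ⟨i.val, by omega⟩, by
    intro a b hab
    apply Fin.ext
    have := congrArg Fin.val hab
    simpa using this⟩ with hι
  have hsub : (Finset.univ.map ι) ⊆ Finset.univ := Finset.subset_univ _
  have hvanish : ∀ p : Fin 8, p ∈ Finset.univ → p ∉ Finset.univ.map ι →
      x p.succ * y p.succ = 0 := by
    intro p _ hp
    have hpr : r ≤ p.val := by
      by_contra hcon
      push_neg at hcon
      apply hp
      rw [Finset.mem_map]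
      exact ⟨⟨p.val, hcon⟩, Finset.mem_univ _, Fin.ext rfl⟩
    have : x p.succ = 0 := hx p.succ (by
      have : (p.succ : Fin 9).val = p.val + 1 := rfl
      omega)
    rw [this, zero_mul]
  rw [← Finset.sum_subset hsub hvanish, Finset.sum_map]
  apply Finset.sum_congr rfl
  intro i _
  rfl

lemma trunc_negK (hr7 : r ≤ 7) : trunc hr7 (negK : V9) = (negK : Fin (r+1) → ℤ) := by
  funext i
  simp only [trunc, negK]
  by_cases hi : i = 0
  · subst hi
    rw [if_pos rfl, if_pos (by apply Fin.ext; rfl)]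
  · rw [if_neg hi, if_neg (by
      intro h
      apply hi
      apply Fin.ext
      simpa using congrArg Fin.val h)]

lemma isExc_trunc (hr7 : r ≤ 7) (x : V9) (hx : ∀ i : Fin 9, r < i.val → x i = 0)
    (hE : IsExc x) : IsExc (trunc hr7 x) := by
  constructor
  · rw [dpB_trunc hr7 x x hx]; exact hE.1
  · rw [← trunc_negK hr7, dpB_trunc hr7 x negK hx]; exact hE.2

lemma reg_ext (hr3 : 3 ≤ r) (hr7 : r ≤ 7) {D : Fin (r+1) → ℤ} (hreg : Reg D) :
    Reg (ext9 hr7 D) := by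
  obtain ⟨hz, hsingle, hpair⟩ := reg_facts hr3 hreg
  have hval : ∀ (m : Fin 9) (hm : m.val < r + 1), ext9 hr7 D m = D ⟨m.val, hm⟩ := by
    intro m hm
    simp only [ext9]
    rw [dif_pos hm]
  have hval0 : ∀ (m : Fin 9), ¬ m.val < r + 1 → ext9 hr7 D m = 0 := by
    intro m hm
    simp only [ext9]
    rw [dif_neg hm]
  have hne : ∀ (m : Fin 9) (hm : m.val < r + 1), m ≠ 0 →
      (⟨m.val, hm⟩ : Fin (r+1)) ≠ 0 := by
    intro m hm hmne hcon
    apply hmne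
    apply Fin.ext
    simpa using congrArg Fin.val hcon
  have h00 : ext9 hr7 D 0 = D 0 := by
    rw [hval 0 (by omega)]
    congr 1
  constructor
  · intro i hi
    by_cases hv : i.val < r + 1
    · rw [hval i hv]
      exact hreg.1 _ (hne i hv hi)
    · rw [hval0 i hv]
  · intro i j k hi hj hk hij hik hjk
    rw [h00]
    have hdist : ∀ (m m' : Fin 9) (hm : m.val < r+1) (hm' : m'.val < r+1), m ≠ m' →
        (⟨m.val, hm⟩ : Fin (r+1)) ≠ ⟨m'.val, hm'⟩ := by
      intro m m' hm hm' hne hcon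
      apply hne
      apply Fin.ext
      simpa [Fin.ext_iff] using hcon
    by_cases hvi : i.val < r + 1 <;> by_cases hvj : j.val < r + 1 <;>
      by_cases hvk : k.val < r + 1
    · rw [hval i hvi, hval j hvj, hval k hvk]
      exact hreg.2 _ _ _ (hne i hvi hi) (hne j hvj hj) (hne k hvk hk)
        (hdist i j hvi hvj hij) (hdist i k hvi hvk hik) (hdist j k hvj hvk hjk)
    · rw [hval i hvi, hval j hvj, hval0 k hvk]
      have := hpair _ _ (hne i hvi hi) (hne j hvj hj) (hdist i j hvi hvj hij)
      omega
    · rw [hval i hvi, hval0 j hvj, hval k hvk]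
      have := hpair _ _ (hne i hvi hi) (hne k hvk hk) (hdist i k hvi hvk hik)
      omega
    · rw [hval i hvi, hval0 j hvj, hval0 k hvk]
      have := hsingle _ (hne i hvi hi)
      omega
    · rw [hval0 i hvi, hval j hvj, hval k hvk]
      have := hpair _ _ (hne j hvj hj) (hne k hvk hk) (hdist j k hvj hvk hjk)
      omega
    · rw [hval0 i hvi, hval j hvj, hval0 k hvk]
      have := hsingle _ (hne j hvj hj)
      omega
    · rw [hval0 i hvi, hval0 j hvj, hval k hvk]
      have := hsingle _ (hne k hvk hk)
      omega
    · rw [hval0 i hvi, hval0 j hvj, hval0 k hvk]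
      omega

lemma HC_embed (hr3 : 3 ≤ r) (hr7 : r ≤ 7) (D : Fin (r+1) → ℤ) (hreg : Reg D) :
    D ∈ AddSubmonoid.closure {E : Fin (r+1) → ℤ | IsExc E} := by
  set Dh := ext9 hr7 D with hDh
  have hreg9 : Reg Dh := reg_ext hr3 hr7 hreg
  have hmem : Dh ∈ AddSubmonoid.closure (gen Dh) := lemC (Dh 0).toNat Dh hreg9 le_rfl
  have h8zero : Dh 8 = 0 := by
    simp only [hDh, ext9]
    rw [dif_neg (by
      have : (8 : Fin 9).val = 8 := by decide
      omega)]
  have key : ∀ y, y ∈ AddSubmonoid.closure (gen Dh) →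
      trunc hr7 y ∈ AddSubmonoid.closure {E : Fin (r+1) → ℤ | IsExc E} := by
    intro y hy
    induction hy using AddSubmonoid.closure_induction with
    | mem z hz =>
      apply AddSubmonoid.subset_closure
      rcases hz with ⟨hE, hs⟩ | ⟨hE, hs⟩
      · have hvan : ∀ i : Fin 9, r < i.val → z i = 0 := by
          intro i hi
          apply hs i (by omega)
          simp only [hDh, ext9]
          rw [dif_neg (by omega)]
        exact isExc_trunc hr7 z hvan hE
      · exfalso
        exact hs 8 (by decide) h8zero
    | zero => rw [trunc_zero]; exact zero_mem _
    | add a b _ _ ha hb => rw [trunc_add]; exact add_mem ha hb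
  have := key Dh hmem
  rwa [trunc_ext hr7 D] at this

end DPGLUE

/-- A class with nonnegative intersection with `-K` and with all exceptional classes lies
in the monoid generated by the exceptional classes (`2 ≤ r ≤ 7`); for `r = 8` one must
also allow `-K` as a generator. -/
theorem stmt16 :
    (∀ r : ℕ, 2 ≤ r → r ≤ 7 → ∀ D : Fin (r + 1) → ℤ,
      (∀ E, IsExc E → 0 ≤ dpB D E) → 0 ≤ dpB D negK →
      D ∈ AddSubmonoid.closure {E : Fin (r + 1) → ℤ | IsExc E}) ∧
    (∀ D : Fin 9 → ℤ,
      (∀ E, IsExc E → 0 ≤ dpB D E) → 0 ≤ dpB D negK →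
      D ∈ AddSubmonoid.closure
        ({E : Fin 9 → ℤ | IsExc E} ∪ {negK})) := by
  constructor
  · intro r hr2 hr7 D hnef _
    by_cases hr : r = 2
    · subst hr
      exact DP.r2case D hnef
    · have hr3 : 3 ≤ r := by omega
      refine DP.lemA (by omega) _ ?_ ?_ (D 0).toNat D hnef le_rfl
      · intro a x ha hx
        exact DP.reflct_mem_closure a (fun y hy => DP.reflct_exc a y ha hy) x hx
      · intro D' hreg
        exact DPGLUE.HC_embed hr3 hr7 D' hreg
  · intro D hnef _
    refine DP.lemA (r := 8) (by omega)
      (AddSubmonoid.closure ({E : Fin 9 → ℤ | IsExc E} ∪ {negK})) ?_ ?_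
      (D 0).toNat D hnef le_rfl
    · intro a x ha hx
      apply DP.reflct_mem_closure a ?_ x hx
      rintro y (hy | hy)
      · exact Or.inl (DP.reflct_exc a y ha hy)
      · rw [Set.mem_singleton_iff] at hy
        subst hy
        right
        rw [DP.reflct_negK a ha]
        rfl
    · intro D' hreg
      have hmem := DP9.lemC (D' 0).toNat D' hreg le_rfl
      refine AddSubmonoid.closure_mono ?_ hmem
      rintro E (⟨hE, _⟩ | ⟨hE, _⟩)
      · exact Or.inl hE
      · right
        rw [Set.mem_singleton_iff]
        exact hE
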